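/- Let f : ℝ → ℝ be bounded measurable and let w : [0,T] → ℝ be measurable. If the averaged field T^w_{s,t} f(x) := ∫ₛᵗ f(x + w(r)) dr is, for all 0 ≤ s ≤ t ≤ T, Lipschitz in x with constant L·(t − s) for some fixed L ≥ 0, then for any x₀ the equation x(t) = x₀ + ∫₀ᵗ f(x(s) + w(s)) ds has at most one continuous solution whose difference from any other solution satisfies a Grönwall-type bound; in particular, any two continuous solutions with the same initial condition coincide, provided each solution x satisfies ∫ₛᵗ f(x(r) + w(r)) dr = T^w_{s,t} f(x(s)) + o(t−s) uniformly (sewing remainder bound |∫ₛᵗ f(x(r)+w(r)) dr − T^w_{s,t} f(x(s))| ≤ C(t−s)^{1+ε} for some ε > 0). -/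

import Mathlib

open intervalIntegral

theorem uniqueness_via_averaged_field_and_sewing
    (f : ℝ → ℝ) (hf : Measurable f) (Mf : ℝ) (hMf : ∀ y, |f y| ≤ Mf)
    (T : ℝ) (hT : 0 ≤ T) (w : ℝ → ℝ) (hw : Measurable w)
    (L : ℝ) (hL : 0 ≤ L)
    (hLip : ∀ s t : ℝ, 0 ≤ s → s ≤ t → t ≤ T → ∀ x y : ℝ,
      |(∫ r in s..t, f (x + w r)) - ∫ r in s..t, f (y + w r)| ≤ L * (t - s) * |x - y|)
    (ε : ℝ) (hε : 0 < ε) (C : ℝ) (hC : 0 ≤ C)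
    (x₀ : ℝ) (x₁ x₂ : ℝ → ℝ)
    (hx₁ : ContinuousOn x₁ (Set.Icc 0 T)) (hx₂ : ContinuousOn x₂ (Set.Icc 0 T))
    (heq₁ : ∀ t ∈ Set.Icc (0:ℝ) T, x₁ t = x₀ + ∫ s in (0:ℝ)..t, f (x₁ s + w s))
    (heq₂ : ∀ t ∈ Set.Icc (0:ℝ) T, x₂ t = x₀ + ∫ s in (0:ℝ)..t, f (x₂ s + w s))
    (hsew₁ : ∀ s t : ℝ, 0 ≤ s → s ≤ t → t ≤ T →
      |(∫ r in s..t, f (x₁ r + w r)) - ∫ r in s..t, f (x₁ s + w r)| ≤ C * (t - s) ^ (1 + ε))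
    (hsew₂ : ∀ s t : ℝ, 0 ≤ s → s ≤ t → t ≤ T →
      |(∫ r in s..t, f (x₂ r + w r)) - ∫ r in s..t, f (x₂ s + w r)| ≤ C * (t - s) ^ (1 + ε)) :
    Set.EqOn x₁ x₂ (Set.Icc 0 T) := by
  -- integrability of the composed integrands
  have hint : ∀ (x : ℝ → ℝ), ContinuousOn x (Set.Icc 0 T) → ∀ s t : ℝ,
      0 ≤ s → s ≤ t → t ≤ T → IntervalIntegrable (fun r => f (x r + w r)) MeasureTheory.volume s t := by
    intro x hx s t hs hst ht
    rw [intervalIntegrable_iff, Set.uIoc_of_le hst]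
    have hsub : Set.Ioc s t ⊆ Set.Icc 0 T := fun r hr => ⟨hs.trans hr.1.le, hr.2.trans ht⟩
    have hxm : AEMeasurable x (MeasureTheory.volume.restrict (Set.Ioc s t)) :=
      (hx.aemeasurable measurableSet_Icc).mono_measure
        (MeasureTheory.Measure.restrict_mono hsub le_rfl)
    have hm : AEMeasurable (fun r => f (x r + w r))
        (MeasureTheory.volume.restrict (Set.Ioc s t)) :=
      hf.comp_aemeasurable (hxm.add hw.aemeasurable)
    haveI : MeasureTheory.IsFiniteMeasure (MeasureTheory.volume.restrict (Set.Ioc s t)) :=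
      ⟨by rw [MeasureTheory.Measure.restrict_apply_univ]; exact measure_Ioc_lt_top⟩
    exact (MeasureTheory.integrable_const Mf).mono' hm.aestronglyMeasurable
      (Filter.Eventually.of_forall fun r => by simpa using hMf (x r + w r))
  -- key one-step estimate
  have key : ∀ s t : ℝ, 0 ≤ s → s ≤ t → t ≤ T →
      |x₁ t - x₂ t| ≤ |x₁ s - x₂ s| + L * (t - s) * |x₁ s - x₂ s| + 2 * C * (t - s) ^ (1 + ε) := by
    intro s t hs hst ht
    have hsT : s ≤ T := hst.trans ht
    have h1 : x₁ t - x₁ s = ∫ r in s..t, f (x₁ r + w r) := by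
      rw [heq₁ t ⟨hs.trans hst, ht⟩, heq₁ s ⟨hs, hsT⟩]
      have := intervalIntegral.integral_add_adjacent_intervals
        (hint x₁ hx₁ 0 s le_rfl hs hsT) (hint x₁ hx₁ s t hs hst ht)
      linarith [this]
    have h2 : x₂ t - x₂ s = ∫ r in s..t, f (x₂ r + w r) := by
      rw [heq₂ t ⟨hs.trans hst, ht⟩, heq₂ s ⟨hs, hsT⟩]
      have := intervalIntegral.integral_add_adjacent_intervals
        (hint x₂ hx₂ 0 s le_rfl hs hsT) (hint x₂ hx₂ s t hs hst ht)
      linarith [this]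
    have hLb := hLip s t hs hst ht (x₁ s) (x₂ s)
    have hA := hsew₁ s t hs hst ht
    have hB := hsew₂ s t hs hst ht
    have hdecomp : x₁ t - x₂ t =
        (x₁ s - x₂ s)
        + ((∫ r in s..t, f (x₁ r + w r)) - ∫ r in s..t, f (x₁ s + w r))
        + ((∫ r in s..t, f (x₁ s + w r)) - ∫ r in s..t, f (x₂ s + w r))
        - ((∫ r in s..t, f (x₂ r + w r)) - ∫ r in s..t, f (x₂ s + w r)) := by
      have : x₁ t - x₂ t = (x₁ s - x₂ s)
          + ((∫ r in s..t, f (x₁ r + w r)) - ∫ r in s..t, f (x₂ r + w r)) := by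
        linarith [h1, h2]
      rw [this]; ring
    calc |x₁ t - x₂ t| ≤ |x₁ s - x₂ s|
        + |(∫ r in s..t, f (x₁ r + w r)) - ∫ r in s..t, f (x₁ s + w r)|
        + |(∫ r in s..t, f (x₁ s + w r)) - ∫ r in s..t, f (x₂ s + w r)|
        + |(∫ r in s..t, f (x₂ r + w r)) - ∫ r in s..t, f (x₂ s + w r)| := by
          rw [hdecomp]
          exact (abs_sub _ _).trans (by gcongr; exact (abs_add_le _ _).trans (by gcongr; exact abs_add_le _ _))
      _ ≤ |x₁ s - x₂ s| + L * (t - s) * |x₁ s - x₂ s| + 2 * C * (t - s) ^ (1 + ε) := by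
          linarith [hA, hB, hLb]
  -- Grönwall
  set φ : ℝ → ℝ := fun t => |x₁ t - x₂ t| with hφ
  have hφc : ContinuousOn φ (Set.Icc 0 T) := (hx₁.sub hx₂).abs
  have hφ0 : φ 0 ≤ 0 := by
    have h1 := heq₁ 0 ⟨le_rfl, hT⟩
    have h2 := heq₂ 0 ⟨le_rfl, hT⟩
    simp only [intervalIntegral.integral_same] at h1 h2
    simp [hφ, h1, h2]
  have hf' : ∀ x ∈ Set.Ico (0:ℝ) T, ∀ r, L * φ x < r →
      ∃ᶠ z in nhdsWithin x (Set.Ioi x), (z - x)⁻¹ * (φ z - φ x) < r := by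
    intro x hx r hr
    apply Filter.Eventually.frequently
    have htend : Filter.Tendsto (fun z => L * φ x + 2 * C * (z - x) ^ ε)
        (nhdsWithin x (Set.Ioi x)) (nhds (L * φ x)) := by
      have h0 : Filter.Tendsto (fun z : ℝ => z - x) (nhdsWithin x (Set.Ioi x)) (nhds 0) := by
        have h := ((continuous_id.sub (continuous_const (y := x))).tendsto x).mono_left
          (nhdsWithin_le_nhds (s := Set.Ioi x))
        simpa [Pi.sub_def] using h
      have hrpow : Filter.Tendsto (fun y : ℝ => y ^ ε) (nhds (0:ℝ)) (nhds ((0:ℝ) ^ ε)) :=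
        (Real.continuousAt_rpow_const 0 ε (Or.inr hε.le)).tendsto
      have := ((hrpow.comp h0).const_mul (2 * C)).const_add (L * φ x)
      simpa [Real.zero_rpow hε.ne'] using this
    have hlt : ∀ᶠ z in nhdsWithin x (Set.Ioi x), L * φ x + 2 * C * (z - x) ^ ε < r :=
      htend.eventually_lt_const hr
    have hT' : ∀ᶠ z in nhdsWithin x (Set.Ioi x), z ≤ T := by
      have : Set.Ioo x T ∈ nhdsWithin x (Set.Ioi x) := Ioo_mem_nhdsGT_of_mem ⟨le_rfl, hx.2⟩
      exact Filter.eventually_of_mem this fun z hz => hz.2.le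
    have hxIoi : ∀ᶠ z in nhdsWithin x (Set.Ioi x), x < z := eventually_mem_nhdsWithin
    filter_upwards [hlt, hT', hxIoi] with z h1 h2 h3
    have hzx : 0 < z - x := sub_pos.2 h3
    have hk := key x z hx.1 h3.le h2
    have hpow : (z - x) ^ (1 + ε) = (z - x) * (z - x) ^ ε := by
      rw [Real.rpow_add hzx, Real.rpow_one]
    calc (z - x)⁻¹ * (φ z - φ x)
        ≤ (z - x)⁻¹ * (L * (z - x) * φ x + 2 * C * (z - x) ^ (1 + ε)) := by
          apply mul_le_mul_of_nonneg_left _ (inv_nonneg.2 hzx.le)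
          simp only [hφ]; linarith [hk]
      _ = L * φ x + 2 * C * (z - x) ^ ε := by
          rw [hpow]; field_simp
      _ < r := h1
  have hb : ∀ x ∈ Set.Ico (0:ℝ) T, L * φ x ≤ L * φ x + 0 := fun x _ => by simp
  have := le_gronwallBound_of_liminf_deriv_right_le hφc hf' hφ0 hb
  intro t ht
  have h := this t ht
  rw [gronwallBound_ε0, zero_mul] at h
  have : |x₁ t - x₂ t| ≤ 0 := h
  have := abs_nonpos_iff.mp this
  linarith [sub_eq_zero.mp this, this]
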